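/- (Sharpened storage bound when BS 1 always has a surplus.) Suppose E₁(t) ≥ 0 for all t ∈ {k,…,N}, and let Δ ≥ 0 satisfy σ₁ + Δ ≤ S_max. Then J*_k(σ₁, σ₂) ≤ J*_k(σ₁ + Δ, σ₂) + α·β·Δ. -/

import Mathlib

/-- A feasible policy for the two-base-station energy cooperation problem over
slots `t ∈ {k, …, N}` from initial storage state `(σ₁, σ₂)`. -/
def Feasible (α β Smax : ℝ) (k N : ℕ) (E₁ E₂ : ℕ → ℝ) (σ₁ σ₂ : ℝ)
    (w₁ w₂ c₁ c₂ d₁ d₂ x₁₂ x₂₁ s₁ s₂ : ℕ → ℝ) : Prop :=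
  s₁ k = σ₁ ∧ s₂ k = σ₂ ∧
  (∀ t ∈ Finset.Icc k N,
    0 ≤ w₁ t ∧ 0 ≤ w₂ t ∧ 0 ≤ c₁ t ∧ 0 ≤ c₂ t ∧ 0 ≤ d₁ t ∧ 0 ≤ d₂ t ∧
      0 ≤ x₁₂ t ∧ 0 ≤ x₂₁ t ∧
      s₁ (t + 1) = s₁ t + α * c₁ t - d₁ t ∧
      s₂ (t + 1) = s₂ t + α * c₂ t - d₂ t ∧
      d₁ t ≤ s₁ t ∧ d₂ t ≤ s₂ t ∧
      0 ≤ E₁ t + w₁ t - c₁ t + α * d₁ t - x₁₂ t + β * x₂₁ t ∧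
      0 ≤ E₂ t + w₂ t - c₂ t + α * d₂ t - x₂₁ t + β * x₁₂ t) ∧
  (∀ t ∈ Finset.Icc k (N + 1),
    0 ≤ s₁ t ∧ s₁ t ≤ Smax ∧ 0 ≤ s₂ t ∧ s₂ t ≤ Smax)

/-- Optimal cost `J*_k(σ₁, σ₂)`: the infimum of total grid draw over feasible policies. -/
noncomputable def Jstar (α β Smax : ℝ) (k N : ℕ) (E₁ E₂ : ℕ → ℝ) (σ₁ σ₂ : ℝ) : ℝ :=
  sInf {r : ℝ | ∃ w₁ w₂ c₁ c₂ d₁ d₂ x₁₂ x₂₁ s₁ s₂ : ℕ → ℝ,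
    Feasible α β Smax k N E₁ E₂ σ₁ σ₂ w₁ w₂ c₁ c₂ d₁ d₂ x₁₂ x₂₁ s₁ s₂ ∧
    (∑ t ∈ Finset.Icc k N, (w₁ t + w₂ t)) = r}

noncomputable def SQ (σ α : ℝ) (k : ℕ) (c d : ℕ → ℝ) : ℕ → ℝ
  | 0 => σ
  | t + 1 => if t + 1 ≤ k then σ
      else SQ σ α k c d t + α * c t - min (d t) (SQ σ α k c d t)

lemma SQ_at_k (σ α : ℝ) (k : ℕ) (c d : ℕ → ℝ) : SQ σ α k c d k = σ := by
  cases k with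
  | zero => rfl
  | succ t => simp [SQ]

lemma SQ_succ (σ α : ℝ) (k : ℕ) (c d : ℕ → ℝ) (t : ℕ) (h : k ≤ t) :
    SQ σ α k c d (t + 1)
      = SQ σ α k c d t + α * c t - min (d t) (SQ σ α k c d t) := by
  simp only [SQ]
  rw [if_neg (by omega)]

lemma sum_tel (f : ℕ → ℝ) (k N : ℕ) (h : k ≤ N) :
    ∑ t ∈ Finset.Icc k N, (f t - f (t + 1)) = f k - f (N + 1) := by
  induction N, h using Nat.le_induction with
  | base => simp
  | succ n hn ih => rw [Finset.sum_Icc_succ_top (by omega), ih]; ring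

lemma construct
    (α β Smax : ℝ) (hα0 : 0 ≤ α) (hα1 : α ≤ 1) (hβ0 : 0 ≤ β) (hβ1 : β ≤ 1)
    (k N : ℕ) (hkN : k ≤ N) (E₁ E₂ : ℕ → ℝ)
    (hE₁ : ∀ t ∈ Finset.Icc k N, 0 ≤ E₁ t)
    (σ₁ σ₂ Δ : ℝ) (hσ₁0 : 0 ≤ σ₁) (hΔ : 0 ≤ Δ)
    (w₁ w₂ c₁ c₂ d₁ d₂ x₁₂ x₂₁ s₁ s₂ : ℕ → ℝ)
    (hF : Feasible α β Smax k N E₁ E₂ (σ₁ + Δ) σ₂ w₁ w₂ c₁ c₂ d₁ d₂ x₁₂ x₂₁ s₁ s₂) :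
    ∃ w₁' w₂' c₁' c₂' d₁' d₂' x₁₂' x₂₁' s₁' s₂' : ℕ → ℝ,
      Feasible α β Smax k N E₁ E₂ σ₁ σ₂ w₁' w₂' c₁' c₂' d₁' d₂' x₁₂' x₂₁' s₁' s₂' ∧
      (∑ t ∈ Finset.Icc k N, (w₁' t + w₂' t)) ≤
        (∑ t ∈ Finset.Icc k N, (w₁ t + w₂ t)) + α * β * Δ := by
  classical
  obtain ⟨hs1k, hs2k, hslot, hsb⟩ := hF
  set e : ℕ → ℝ := fun t => if α = 0 then c₁ t else min (c₁ t) (d₁ t / α) with he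
  set ch : ℕ → ℝ := fun t => c₁ t - e t with hch
  set dh : ℕ → ℝ := fun t => d₁ t - α * e t with hdh
  set sQ : ℕ → ℝ := SQ σ₁ α k ch dh with hsQ
  set dQ : ℕ → ℝ := fun t => min (dh t) (sQ t) with hdQ
  set sl : ℕ → ℝ := fun t =>
    E₁ t + w₁ t - ch t + α * dh t - x₁₂ t + β * x₂₁ t with hsl
  set z : ℕ → ℝ := fun t => max 0 (α * (dh t - dQ t) - sl t) with hz
  -- basic per-slot facts
  have hA : ∀ t ∈ Finset.Icc k N, 0 ≤ e t := by
    intro t ht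
    obtain ⟨-, -, hc1, -, hd1, -⟩ := hslot t ht
    by_cases hA0 : α = 0
    · simp [he, hA0]; exact hc1
    · simp only [he, if_neg hA0]
      exact le_min hc1 (div_nonneg hd1 hα0)
  have hB : ∀ t ∈ Finset.Icc k N, e t ≤ c₁ t := by
    intro t ht
    by_cases hA0 : α = 0
    · simp [he, hA0]
    · simp only [he, if_neg hA0]; exact min_le_left _ _
  have hC : ∀ t ∈ Finset.Icc k N, α * e t ≤ d₁ t := by
    intro t ht
    obtain ⟨-, -, -, -, hd1, -⟩ := hslot t ht
    by_cases hA0 : α = 0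
    · simp [hA0]; exact hd1
    · have hαpos : 0 < α := lt_of_le_of_ne hα0 (Ne.symm hA0)
      simp only [he, if_neg hA0]
      calc α * min (c₁ t) (d₁ t / α) ≤ α * (d₁ t / α) :=
            mul_le_mul_of_nonneg_left (min_le_right _ _) hα0
        _ = d₁ t := by field_simp
  have hch0 : ∀ t ∈ Finset.Icc k N, 0 ≤ ch t := by
    intro t ht; have := hB t ht; simp only [hch]; linarith
  have hdh0 : ∀ t ∈ Finset.Icc k N, 0 ≤ dh t := by
    intro t ht; have := hC t ht; simp only [hdh]; linarith
  have hD : ∀ t, α * ch t - dh t = α * c₁ t - d₁ t := by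
    intro t; simp only [hch, hdh]; ring
  have hE : ∀ t ∈ Finset.Icc k N, 0 ≤ sl t := by
    intro t ht
    obtain ⟨hw1, -, -, -, -, -, -, -, -, -, -, -, hb1, -⟩ := hslot t ht
    have h1 := hA t ht
    have h2 : sl t = (E₁ t + w₁ t - c₁ t + α * d₁ t - x₁₂ t + β * x₂₁ t)
        + (1 - α ^ 2) * e t := by
      simp only [hsl, hch, hdh]; ring
    nlinarith [mul_nonneg (by nlinarith : (0:ℝ) ≤ 1 - α ^ 2) h1]
  have hK : ∀ t ∈ Finset.Icc k N, α * dh t ≤ x₁₂ t + sl t := by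
    intro t ht
    obtain ⟨hw1, -, -, -, hd1, -, hx12, hx21, -⟩ := hslot t ht
    have hE1 := hE₁ t ht
    have hsl0 := hE t ht
    by_cases hA0 : α = 0
    · rw [hA0]; simpa using by linarith
    · by_cases hm : c₁ t ≤ d₁ t / α
      · -- e = c₁, ch = 0
        have hch_eq : ch t = 0 := by
          simp only [hch, he, if_neg hA0, min_eq_left hm]; ring
        have : x₁₂ t + sl t - α * dh t = E₁ t + w₁ t - ch t + β * x₂₁ t := by
          simp only [hsl]; ring
        rw [hch_eq] at this
        nlinarith [mul_nonneg hβ0 hx21]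
      · -- e = d₁/α, dh = 0
        have hαpos : 0 < α := lt_of_le_of_ne hα0 (Ne.symm hA0)
        have hdh_eq : dh t = 0 := by
          simp only [hdh, he, if_neg hA0, min_eq_right (le_of_not_ge hm)]
          field_simp; ring
        rw [hdh_eq]
        simpa using by linarith
  -- the invariant
  have inv : ∀ t, k ≤ t → t ≤ N + 1 →
      0 ≤ sQ t ∧ sQ t ≤ s₁ t ∧ s₁ t - sQ t ≤ Δ := by
    intro t hkt
    induction t, hkt using Nat.le_induction with
    | base =>
      intro _
      have h1 : sQ k = σ₁ := by rw [hsQ]; exact SQ_at_k _ _ _ _ _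
      rw [h1, hs1k]
      exact ⟨hσ₁0, by linarith, by linarith⟩
    | succ n hn ih =>
      intro hn1
      have htI : n ∈ Finset.Icc k N := by
        simp only [Finset.mem_Icc]; omega
      obtain ⟨h0, h1, h2⟩ := ih (by omega)
      obtain ⟨-, -, -, -, hd1, -, -, -, hs1e, -, hds1, -⟩ := hslot n htI
      have hs : sQ (n + 1) = sQ n + α * ch n - min (dh n) (sQ n) := by
        rw [hsQ]; exact SQ_succ _ _ _ _ _ _ hn
      have hid := hD n
      have hcn := mul_nonneg hα0 (hch0 n htI)
      have hdhn := hdh0 n htI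
      have hCn := hC n htI
      have hdhle : dh n ≤ s₁ n := by simp only [hdh]; nlinarith [mul_nonneg hα0 (hA n htI)]
      rcases le_total (dh n) (sQ n) with hm | hm
      · rw [min_eq_left hm] at hs
        refine ⟨by linarith, by linarith, by linarith⟩
      · rw [min_eq_right hm] at hs
        refine ⟨by linarith, by linarith, by linarith⟩
  -- the new policy is feasible
  refine ⟨w₁, fun t => w₂ t + β * z t, ch, c₂, dQ, d₂, fun t => x₁₂ t - z t,
      x₂₁, sQ, s₂, ⟨?_, hs2k, ?_, ?_⟩, ?_⟩
  · rw [hsQ]; exact SQ_at_k _ _ _ _ _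
  · intro t ht
    have htk : k ≤ t := (Finset.mem_Icc.mp ht).1
    have htn : t ≤ N := (Finset.mem_Icc.mp ht).2
    obtain ⟨hw1, hw2, hc1, hc2, hd1, hd2, hx12, hx21, hs1e, hs2e, hds1, hds2,
      hb1, hb2⟩ := hslot t ht
    obtain ⟨hq0, hq1, hq2⟩ := inv t htk (by omega)
    have hsl0 := hE t ht
    have hz0 : 0 ≤ z t := le_max_left _ _
    have hr0 : 0 ≤ dh t - dQ t := by
      simp only [hdQ]; have := min_le_left (dh t) (sQ t); linarith
    have hzle : z t ≤ α * (dh t - dQ t) := by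
      apply max_le (mul_nonneg hα0 hr0)
      linarith
    have hzx : z t ≤ x₁₂ t := by
      apply max_le hx12
      have h1 : α * (dh t - dQ t) ≤ α * dh t := by
        have : dQ t ≥ 0 := le_min (hdh0 t ht) hq0
        nlinarith
      have h2 := hK t ht
      linarith
    refine ⟨hw1, by positivity, hch0 t ht, hc2, le_min (hdh0 t ht) hq0, hd2,
      by simpa using sub_nonneg.mpr hzx, hx21, ?_, hs2e, min_le_right _ _, hds2, ?_, ?_⟩
    · rw [hsQ]; exact SQ_succ _ _ _ _ _ _ htk
    · -- node 1 balance
      have hzge : α * (dh t - dQ t) - sl t ≤ z t := le_max_right _ _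
      have : E₁ t + w₁ t - ch t + α * dQ t - (x₁₂ t - z t) + β * x₂₁ t
          = sl t - α * (dh t - dQ t) + z t := by simp only [hsl]; ring
      rw [this]; linarith
    · -- node 2 balance
      have : E₂ t + (w₂ t + β * z t) - c₂ t + α * d₂ t - x₂₁ t
          + β * (x₁₂ t - z t)
          = E₂ t + w₂ t - c₂ t + α * d₂ t - x₂₁ t + β * x₁₂ t := by ring
      rw [this]; exact hb2
  · intro t ht
    obtain ⟨htk, htn⟩ := Finset.mem_Icc.mp ht
    obtain ⟨hq0, hq1, hq2⟩ := inv t htk htn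
    obtain ⟨ha, hb, hc, hd⟩ := hsb t ht
    exact ⟨hq0, by linarith, hc, hd⟩
  · -- cost bound
    have hz_le : ∀ t ∈ Finset.Icc k N, z t ≤ α * (dh t - dQ t) := by
      intro t ht
      have hsl0 := hE t ht
      have htk : k ≤ t := (Finset.mem_Icc.mp ht).1
      obtain ⟨hq0, -, -⟩ := inv t htk (by have := (Finset.mem_Icc.mp ht).2; omega)
      have hr0 : 0 ≤ dh t - dQ t := by
        simp only [hdQ]; have := min_le_left (dh t) (sQ t); linarith
      exact max_le (mul_nonneg hα0 hr0) (by linarith)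
    have htel : ∀ t ∈ Finset.Icc k N,
        dh t - dQ t = (fun u => s₁ u - sQ u) t - (fun u => s₁ u - sQ u) (t + 1) := by
      intro t ht
      have htk : k ≤ t := (Finset.mem_Icc.mp ht).1
      obtain ⟨-, -, -, -, -, -, -, -, hs1e, -⟩ := hslot t ht
      have hs : sQ (t + 1) = sQ t + α * ch t - dQ t := by
        rw [hsQ]; exact SQ_succ _ _ _ _ _ _ htk
      have hid := hD t
      simp only
      linarith
    have hsum_r : ∑ t ∈ Finset.Icc k N, (dh t - dQ t) ≤ Δ := by
      rw [Finset.sum_congr rfl htel, sum_tel _ _ _ hkN]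
      have h1 : sQ k = σ₁ := by rw [hsQ]; exact SQ_at_k _ _ _ _ _
      obtain ⟨-, h2, -⟩ := inv (N + 1) (by omega) le_rfl
      rw [h1, hs1k]
      linarith
    have hsum_z : ∑ t ∈ Finset.Icc k N, z t ≤ α * Δ := by
      calc ∑ t ∈ Finset.Icc k N, z t
          ≤ ∑ t ∈ Finset.Icc k N, α * (dh t - dQ t) := Finset.sum_le_sum hz_le
        _ = α * ∑ t ∈ Finset.Icc k N, (dh t - dQ t) := by rw [Finset.mul_sum]
        _ ≤ α * Δ := mul_le_mul_of_nonneg_left hsum_r hα0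
    have hsplit : ∑ t ∈ Finset.Icc k N, (w₁ t + (w₂ t + β * z t))
        = (∑ t ∈ Finset.Icc k N, (w₁ t + w₂ t))
          + β * ∑ t ∈ Finset.Icc k N, z t := by
      rw [Finset.mul_sum, ← Finset.sum_add_distrib]
      exact Finset.sum_congr rfl fun t _ => by ring
    rw [hsplit]
    have h3 : β * ∑ t ∈ Finset.Icc k N, z t ≤ β * (α * Δ) :=
      mul_le_mul_of_nonneg_left hsum_z hβ0
    have h4 : β * (α * Δ) = α * β * Δ := by ring
    linarith

lemma trivial_feasible (α β Smax : ℝ) (hα0 : 0 ≤ α) (k N : ℕ) (E₁ E₂ : ℕ → ℝ)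
    (σ₁ σ₂ : ℝ) (h0 : 0 ≤ σ₁) (h1 : σ₁ ≤ Smax) (h0' : 0 ≤ σ₂) (h1' : σ₂ ≤ Smax) :
    Feasible α β Smax k N E₁ E₂ σ₁ σ₂ (fun t => max 0 (-E₁ t))
      (fun t => max 0 (-E₂ t)) (fun _ => 0) (fun _ => 0) (fun _ => 0) (fun _ => 0)
      (fun _ => 0) (fun _ => 0) (fun _ => σ₁) (fun _ => σ₂) := by
  refine ⟨rfl, rfl, ?_, ?_⟩
  · intro t ht
    refine ⟨le_max_left _ _, le_max_left _ _, le_rfl, le_rfl, le_rfl, le_rfl,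
      le_rfl, le_rfl, by ring, by ring, h0, h0', ?_, ?_⟩
    · have := le_max_right 0 (-E₁ t); simp only [mul_zero]; linarith
    · have := le_max_right 0 (-E₂ t); simp only [mul_zero]; linarith
  · intro t ht
    exact ⟨h0, h1, h0', h1'⟩

lemma cost_nonneg (α β Smax : ℝ) (k N : ℕ) (E₁ E₂ : ℕ → ℝ) (σ₁ σ₂ : ℝ) (r : ℝ)
    (hr : r ∈ {r : ℝ | ∃ w₁ w₂ c₁ c₂ d₁ d₂ x₁₂ x₂₁ s₁ s₂ : ℕ → ℝ,
      Feasible α β Smax k N E₁ E₂ σ₁ σ₂ w₁ w₂ c₁ c₂ d₁ d₂ x₁₂ x₂₁ s₁ s₂ ∧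
      (∑ t ∈ Finset.Icc k N, (w₁ t + w₂ t)) = r}) : 0 ≤ r := by
  obtain ⟨w₁, w₂, c₁, c₂, d₁, d₂, x₁₂, x₂₁, s₁, s₂, hF, hsum⟩ := hr
  rw [← hsum]
  apply Finset.sum_nonneg
  intro t ht
  obtain ⟨h1, h2, -⟩ := hF.2.2.1 t ht
  linarith

/-- Claim 1: sharpened storage bound when BS 1 always has a surplus. -/
theorem sharpened_storage_bound_surplus
    (α β Smax : ℝ) (hα : 0 ≤ α ∧ α ≤ 1) (hβ : 0 ≤ β ∧ β ≤ 1) (hS : 0 < Smax)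
    (k N : ℕ) (hkN : k ≤ N) (E₁ E₂ : ℕ → ℝ)
    (hE₁ : ∀ t ∈ Finset.Icc k N, 0 ≤ E₁ t)
    (σ₁ σ₂ : ℝ) (hσ₁ : 0 ≤ σ₁ ∧ σ₁ ≤ Smax) (hσ₂ : 0 ≤ σ₂ ∧ σ₂ ≤ Smax)
    (Δ : ℝ) (hΔ : 0 ≤ Δ) (hcap : σ₁ + Δ ≤ Smax) :
    Jstar α β Smax k N E₁ E₂ σ₁ σ₂ ≤
      Jstar α β Smax k N E₁ E₂ (σ₁ + Δ) σ₂ + α * β * Δ := by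
  obtain ⟨hα0, hα1⟩ := hα
  obtain ⟨hβ0, hβ1⟩ := hβ
  obtain ⟨hσ10, hσ11⟩ := hσ₁
  obtain ⟨hσ20, hσ21⟩ := hσ₂
  set S1 := {r : ℝ | ∃ w₁ w₂ c₁ c₂ d₁ d₂ x₁₂ x₂₁ s₁ s₂ : ℕ → ℝ,
      Feasible α β Smax k N E₁ E₂ σ₁ σ₂ w₁ w₂ c₁ c₂ d₁ d₂ x₁₂ x₂₁ s₁ s₂ ∧
      (∑ t ∈ Finset.Icc k N, (w₁ t + w₂ t)) = r} with hS1
  set S2 := {r : ℝ | ∃ w₁ w₂ c₁ c₂ d₁ d₂ x₁₂ x₂₁ s₁ s₂ : ℕ → ℝ,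
      Feasible α β Smax k N E₁ E₂ (σ₁ + Δ) σ₂ w₁ w₂ c₁ c₂ d₁ d₂ x₁₂ x₂₁ s₁ s₂ ∧
      (∑ t ∈ Finset.Icc k N, (w₁ t + w₂ t)) = r} with hS2
  have hbdd1 : BddBelow S1 := ⟨0, fun r hr => cost_nonneg _ _ _ _ _ _ _ _ _ r hr⟩
  have hne2 : S2.Nonempty := by
    refine ⟨∑ t ∈ Finset.Icc k N, (max 0 (-E₁ t) + max 0 (-E₂ t)),
      _, _, _, _, _, _, _, _, _, _,
      trivial_feasible α β Smax hα0 k N E₁ E₂ (σ₁ + Δ) σ₂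
        (by linarith) hcap hσ20 hσ21, rfl⟩
  have key : ∀ r ∈ S2, Jstar α β Smax k N E₁ E₂ σ₁ σ₂ ≤ r + α * β * Δ := by
    intro r hr
    obtain ⟨w₁, w₂, c₁, c₂, d₁, d₂, x₁₂, x₂₁, s₁, s₂, hF, hsum⟩ := hr
    obtain ⟨w₁', w₂', c₁', c₂', d₁', d₂', x₁₂', x₂₁', s₁', s₂', hF', hle⟩ :=
      construct α β Smax hα0 hα1 hβ0 hβ1 k N hkN E₁ E₂ hE₁ σ₁ σ₂ Δ hσ10 hΔ
        w₁ w₂ c₁ c₂ d₁ d₂ x₁₂ x₂₁ s₁ s₂ hF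
    have hmem : (∑ t ∈ Finset.Icc k N, (w₁' t + w₂' t)) ∈ S1 :=
      ⟨w₁', w₂', c₁', c₂', d₁', d₂', x₁₂', x₂₁', s₁', s₂', hF', rfl⟩
    have h1 : Jstar α β Smax k N E₁ E₂ σ₁ σ₂
        ≤ ∑ t ∈ Finset.Icc k N, (w₁' t + w₂' t) := csInf_le hbdd1 hmem
    rw [← hsum]
    linarith
  have h2 : Jstar α β Smax k N E₁ E₂ σ₁ σ₂ - α * β * Δ
      ≤ Jstar α β Smax k N E₁ E₂ (σ₁ + Δ) σ₂ := by
    apply le_csInf hne2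
    intro r hr
    have := key r hr
    linarith
  linarith
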